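/- Let μ be a finite Borel measure on ℝ whose support is contained in [0, R] for some R > 0, and let (n_k)_{k≥0} be a strictly increasing sequence of natural numbers with n_0 = 0 and Σ_{k≥1} 1/n_k = ∞. If φ : ℝ → ℂ is μ-integrable and ∫ x^{n_k} φ(x) dμ(x) = 0 for every k ≥ 0, then φ = 0 μ-almost everywhere. -/

import Mathlib

open MeasureTheory
open scoped ENNReal

open intervalIntegral Finset
open scoped NNReal


lemma muntz_approx (n : ℕ → ℕ) (hmono : StrictMono n) (h0 : n 0 = 0) (m : ℕ)
    (hm1 : 1 ≤ m) (hm : ∀ j, m ≠ n (j + 1)) (k : ℕ) :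
    ∃ a : ℕ → ℝ, ∀ x ∈ Set.Icc (0 : ℝ) 1,
      |x ^ m - ∑ j ∈ range k, a j * x ^ n (j + 1)| ≤
        ∏ j ∈ range k, |1 - (m : ℝ) / (n (j + 1))| := by
  induction k with
  | zero =>
      refine ⟨0, fun x hx => ?_⟩
      simp only [range_zero, sum_empty, prod_empty, Pi.zero_apply, zero_mul, sub_zero]
      rw [abs_of_nonneg (pow_nonneg hx.1 m)]
      exact pow_le_one₀ hx.1 hx.2
  | succ k ih =>
      obtain ⟨a, ha⟩ := ih
      have hlam0 : 0 < n (k + 1) := h0 ▸ hmono (Nat.succ_pos k)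
      set L : ℝ := (n (k + 1) : ℝ) with hLdef
      have hL0 : (0 : ℝ) < L := by rw [hLdef]; exact_mod_cast hlam0
      have hne : ∀ j ∈ range k, ((n (j + 1) : ℝ)) ≠ L := by
        intro j hj
        rw [mem_range] at hj
        have h2 : n (j + 1) < n (k + 1) := hmono (by omega)
        rw [hLdef]
        exact_mod_cast h2.ne
      have hmL : (m : ℝ) ≠ L := by rw [hLdef]; exact_mod_cast hm k
      set c : ℕ → ℝ := fun j => ((m : ℝ) - L) / ((n (j + 1) : ℝ) - L) * a j with hc
      refine ⟨fun j => if j = k then 1 - ∑ i ∈ range k, c i else c j, fun x hx => ?_⟩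
      rw [prod_range_succ]
      have hsum : ∑ j ∈ range (k + 1),
            (if j = k then 1 - ∑ i ∈ range k, c i else c j) * x ^ n (j + 1)
          = ∑ j ∈ range k, c j * x ^ n (j + 1)
            + (1 - ∑ i ∈ range k, c i) * x ^ n (k + 1) := by
        rw [sum_range_succ, if_pos rfl]
        congr 1
        refine sum_congr rfl fun j hj => ?_
        rw [mem_range] at hj
        rw [if_neg (by omega)]
      rw [hsum]
      set B := ∏ j ∈ range k, |1 - (m : ℝ) / (n (j + 1))| with hB
      have hB0 : 0 ≤ B := prod_nonneg fun _ _ => abs_nonneg _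
      rcases eq_or_lt_of_le hx.1 with h0x | h0x
      · -- x = 0
        have hz : ∀ j : ℕ, (0 : ℝ) ^ n (j + 1) = 0 := fun j =>
          zero_pow (h0 ▸ hmono (Nat.succ_pos j)).ne'
        rw [← h0x]
        simp only [hz, zero_pow (by omega : m ≠ 0), mul_zero, sum_const_zero, add_zero,
          sub_zero, abs_zero]
        exact mul_nonneg hB0 (abs_nonneg _)
      · -- 0 < x
        set lamZ : ℤ := (n (k + 1) : ℤ) with hlamZ
        set e : ℝ → ℝ := fun t => t ^ m - ∑ j ∈ range k, a j * t ^ n (j + 1) with he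
        set f : ℝ → ℝ := fun t => e t * t ^ (-lamZ - 1) with hf
        have h0mem : (0 : ℝ) ∉ Set.uIcc x 1 := by
          rw [Set.uIcc_of_le hx.2]
          exact fun h => absurd h.1 (not_le.mpr h0x)
        have hint : ∀ p : ℕ,
            IntervalIntegrable (fun t : ℝ => t ^ ((p : ℤ) - lamZ - 1)) volume x 1 :=
          fun p => intervalIntegrable_zpow (Or.inr h0mem)
        have hfeq : Set.EqOn f (fun t => t ^ ((m : ℤ) - lamZ - 1)
            - ∑ j ∈ range k, a j * t ^ ((n (j + 1) : ℤ) - lamZ - 1)) (Set.uIcc x 1) := by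
          intro t ht
          have ht0 : 0 < t := by
            rw [Set.uIcc_of_le hx.2] at ht
            exact h0x.trans_le ht.1
          have key : ∀ p : ℕ, (t : ℝ) ^ p * t ^ (-lamZ - 1) = t ^ ((p : ℤ) - lamZ - 1) := by
            intro p
            rw [← zpow_natCast t p, ← zpow_add₀ ht0.ne']
            ring_nf
          simp only [hf, he, sub_mul, sum_mul, mul_assoc, key]
        have hzint : ∀ p : ℕ, (p : ℝ) ≠ L →
            ∫ t in x..1, t ^ ((p : ℤ) - lamZ - 1)
              = (1 - x ^ ((p : ℤ) - lamZ)) / ((p : ℝ) - L) := by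
          intro p hp
          have hpl : (p : ℤ) ≠ lamZ := by
            rw [hlamZ]
            intro h
            apply hp
            rw [hLdef]
            exact_mod_cast h
          rw [integral_zpow (Or.inr ⟨by omega, h0mem⟩)]
          have h1 : (p : ℤ) - lamZ - 1 + 1 = (p : ℤ) - lamZ := by ring
          rw [h1, one_zpow]
          congr 1
          rw [hLdef, hlamZ]
          push_cast
          ring
        have hI : ∫ t in x..1, f t
            = (1 - x ^ ((m : ℤ) - lamZ)) / ((m : ℝ) - L)
              - ∑ j ∈ range k, a j * ((1 - x ^ ((n (j + 1) : ℤ) - lamZ)) / ((n (j + 1) : ℝ) - L)) := by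
          have hgi : IntervalIntegrable
              (fun t : ℝ => ∑ j ∈ range k, a j * t ^ ((n (j + 1) : ℤ) - lamZ - 1))
              volume x 1 := by
            have h2 := IntervalIntegrable.sum (μ := volume) (range k)
              (f := fun j => fun t : ℝ => a j * t ^ ((n (j + 1) : ℤ) - lamZ - 1))
              (fun j _ => (hint (n (j + 1))).const_mul (a j))
            have h3 : (fun t : ℝ => ∑ j ∈ range k, a j * t ^ ((n (j + 1) : ℤ) - lamZ - 1))
                = ∑ j ∈ range k, fun t : ℝ => a j * t ^ ((n (j + 1) : ℤ) - lamZ - 1) := by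
              ext t; simp
            rw [h3]
            exact h2
          rw [intervalIntegral.integral_congr hfeq,
            intervalIntegral.integral_sub (hint m) hgi,
            intervalIntegral.integral_finset_sum
              (fun j _ => (hint (n (j + 1))).const_mul (a j)),
            hzint m hmL]
          congr 1
          refine sum_congr rfl fun j hj => ?_
          rw [intervalIntegral.integral_const_mul, hzint _ (hne j hj)]
        have hxlam : (0 : ℝ) < x ^ n (k + 1) := pow_pos h0x _
        have hpowz : ∀ p : ℕ, x ^ ((p : ℤ) - lamZ) = x ^ p / x ^ n (k + 1) := by
          intro p
          rw [zpow_sub₀ h0x.ne', zpow_natCast, hlamZ, zpow_natCast]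
        have hkey : x ^ m - (∑ j ∈ range k, c j * x ^ n (j + 1)
              + (1 - ∑ i ∈ range k, c i) * x ^ n (k + 1))
            = (L - m) * x ^ n (k + 1) * ∫ t in x..1, f t := by
          rw [hI, mul_sub, Finset.mul_sum]
          have hmain : (L - m) * x ^ n (k + 1) * ((1 - x ^ ((m : ℤ) - lamZ)) / ((m : ℝ) - L))
              = x ^ m - x ^ n (k + 1) := by
            rw [hpowz]
            have hd : (m : ℝ) - L ≠ 0 := sub_ne_zero.mpr hmL
            field_simp
            ring
          rw [hmain]
          have hterm : ∀ j ∈ range k,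
              (L - m) * x ^ n (k + 1)
                * (a j * ((1 - x ^ ((n (j + 1) : ℤ) - lamZ)) / ((n (j + 1) : ℝ) - L)))
              = c j * x ^ n (j + 1) - c j * x ^ n (k + 1) := by
            intro j hj
            rw [hpowz, hc]
            have hd : (n (j + 1) : ℝ) - L ≠ 0 := sub_ne_zero.mpr (hne j hj)
            field_simp
            ring
          rw [sum_congr rfl hterm, Finset.sum_sub_distrib, ← Finset.sum_mul]
          ring
        have hbound : |∫ t in x..1, f t| ≤ B * ((x ^ (-lamZ) - 1) / L) := by
          have hgint : IntervalIntegrable (fun t : ℝ => B * t ^ (-lamZ - 1)) volume x 1 :=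
            (intervalIntegrable_zpow (Or.inr h0mem)).const_mul B
          have hae : ∀ᵐ t ∂volume.restrict (Set.uIoc x 1), ‖f t‖ ≤ B * t ^ (-lamZ - 1) := by
            refine (ae_restrict_iff' measurableSet_uIoc).2 (Filter.Eventually.of_forall
              fun t ht => ?_)
            rw [Set.uIoc_of_le hx.2] at ht
            have ht0 : 0 < t := h0x.trans ht.1
            have hz0 : (0 : ℝ) < t ^ (-lamZ - 1) := zpow_pos ht0 _
            have : ‖f t‖ = |e t| * t ^ (-lamZ - 1) := by
              rw [hf, Real.norm_eq_abs, abs_mul, abs_of_pos hz0]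
            rw [this]
            exact mul_le_mul_of_nonneg_right (ha t ⟨ht0.le, ht.2⟩) hz0.le
          have h1 := intervalIntegral.norm_integral_le_abs_of_norm_le hae hgint
          rw [Real.norm_eq_abs] at h1
          refine h1.trans ?_
          have hxz : (1 : ℝ) ≤ x ^ (-lamZ) := by
            rw [zpow_neg, hlamZ, zpow_natCast]
            exact (one_le_inv₀ hxlam).mpr (pow_le_one₀ h0x.le hx.2)
          have hcast : ((-lamZ - 1 : ℤ) : ℝ) + 1 = -L := by
            rw [hLdef, hlamZ]; push_cast; ring
          have hval : ∫ t in x..1, B * t ^ (-lamZ - 1) = B * ((x ^ (-lamZ) - 1) / L) := by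
            rw [intervalIntegral.integral_const_mul,
              integral_zpow (Or.inr ⟨by omega, h0mem⟩)]
            have h2 : -lamZ - 1 + 1 = -lamZ := by ring
            rw [h2, one_zpow, hcast]
            have hL' : L ≠ 0 := hL0.ne'
            field_simp
            ring
          rw [hval, abs_of_nonneg (mul_nonneg hB0
            (div_nonneg (by linarith) hL0.le))]
        -- conclude
        rw [hkey, abs_mul, abs_mul, abs_of_pos hxlam]
        have hxx : (x ^ n (k + 1)) * x ^ (-lamZ) = 1 := by
          rw [← zpow_natCast x (n (k + 1)), ← zpow_add₀ h0x.ne', hlamZ]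
          simp
        have habs : |1 - (m : ℝ) / L| = |L - m| / L := by
          rw [show (1 : ℝ) - (m : ℝ) / L = (L - m) / L by field_simp, abs_div,
            abs_of_pos hL0]
        calc |L - (m : ℝ)| * x ^ n (k + 1) * |∫ t in x..1, f t|
            ≤ |L - (m : ℝ)| * x ^ n (k + 1) * (B * ((x ^ (-lamZ) - 1) / L)) := by
              apply mul_le_mul_of_nonneg_left hbound (by positivity)
          _ = (|L - (m : ℝ)| / L) * B * (1 - x ^ n (k + 1)) := by
              linear_combination (|L - (m : ℝ)| * B / L) * hxx
          _ ≤ (|L - (m : ℝ)| / L) * B * 1 := by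
              apply mul_le_mul_of_nonneg_left (by linarith [hxlam]) (by positivity)
          _ = B * |1 - (m : ℝ) / L| := by rw [habs]; ring

lemma muntz_prod_tendsto_zero (n : ℕ → ℕ) (hmono : StrictMono n) (h0 : n 0 = 0)
    (hdiv : ∑' k : ℕ, ((n (k + 1) : ℝ≥0∞))⁻¹ = ⊤) (m : ℕ) (hm1 : 1 ≤ m) :
    Filter.Tendsto (fun k => ∏ j ∈ range k, |1 - (m : ℝ) / (n (j + 1))|)
      Filter.atTop (nhds 0) := by
  have hpos : ∀ j : ℕ, 0 < n (j + 1) := fun j => h0 ▸ hmono (Nat.succ_pos j)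
  set g : ℕ → ℝ := fun j => ((n (j + 1) : ℝ))⁻¹ with hg
  have hgnn : ∀ j, 0 ≤ g j := fun j => inv_nonneg.2 (Nat.cast_nonneg _)
  have hnots : ¬ Summable g := by
    intro hs
    set gN : ℕ → ℝ≥0 := fun j => (n (j + 1) : ℝ≥0)⁻¹ with hgN
    have hsN : Summable gN := by
      rw [← NNReal.summable_coe]
      have hco : (fun a => ((gN a : ℝ))) = g := by
        ext a
        simp [hgN, hg]
      rw [hco]
      exact hs
    have hne : (∑' j, (gN j : ℝ≥0∞)) ≠ ⊤ := ENNReal.tsum_coe_ne_top_iff_summable.2 hsN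
    apply hne
    rw [← hdiv]
    refine tsum_congr fun j => ?_
    have hnz : ((n (j + 1) : ℝ≥0)) ≠ 0 := by exact_mod_cast (hpos j).ne'
    simp [hgN, ENNReal.coe_inv hnz]
  have hS : Filter.Tendsto (fun k => ∑ j ∈ range k, g j) Filter.atTop Filter.atTop :=
    (not_summable_iff_tendsto_nat_atTop_of_nonneg hgnn).1 hnots
  set C : ℝ := ∏ j ∈ range m, |1 - (m : ℝ) / (n (j + 1))| with hC
  have hC0 : 0 ≤ C := prod_nonneg fun _ _ => abs_nonneg _
  -- bound for k ≥ m
  have hbound : ∀ k, m ≤ k → ∏ j ∈ range k, |1 - (m : ℝ) / (n (j + 1))|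
      ≤ C * Real.exp (∑ j ∈ range m, g j - ∑ j ∈ range k, g j) := by
    intro k hk
    rw [← Finset.prod_range_mul_prod_Ico _ hk]
    have hterm : ∀ j ∈ Finset.Ico m k, |1 - (m : ℝ) / (n (j + 1))| ≤ Real.exp (-g j) := by
      intro j hj
      rw [Finset.mem_Ico] at hj
      have hnj : m < n (j + 1) := lt_of_lt_of_le (Nat.lt_succ_of_le hj.1) hmono.le_apply
      have hnj0 : (0 : ℝ) < (n (j + 1) : ℝ) := by exact_mod_cast hpos j
      have hfrac : (m : ℝ) / (n (j + 1)) < 1 := by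
        rw [div_lt_one hnj0]; exact_mod_cast hnj
      have hfrac0 : 0 < (m : ℝ) / (n (j + 1)) := div_pos (by exact_mod_cast hm1) hnj0
      rw [abs_of_nonneg (by linarith)]
      have h1 : 1 - (m : ℝ) / (n (j + 1)) ≤ Real.exp (-((m : ℝ) / (n (j + 1)))) := by
        have := Real.add_one_le_exp (-((m : ℝ) / (n (j + 1))))
        linarith
      refine h1.trans (Real.exp_le_exp.2 ?_)
      rw [neg_le_neg_iff]
      show ((n (j + 1) : ℝ))⁻¹ ≤ (m : ℝ) / (n (j + 1))
      rw [inv_eq_one_div]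
      gcongr
      exact_mod_cast hm1
    calc C * ∏ j ∈ Finset.Ico m k, |1 - (m : ℝ) / (n (j + 1))|
        ≤ C * ∏ j ∈ Finset.Ico m k, Real.exp (-g j) := by
          apply mul_le_mul_of_nonneg_left (Finset.prod_le_prod
            (fun j _ => abs_nonneg _) hterm) hC0
      _ = C * Real.exp (∑ j ∈ range m, g j - ∑ j ∈ range k, g j) := by
          rw [← Real.exp_sum]
          have hIco : ∑ j ∈ Finset.Ico m k, -g j
              = ∑ j ∈ range m, g j - ∑ j ∈ range k, g j := by
            rw [Finset.sum_neg_distrib, Finset.sum_Ico_eq_sub _ hk]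
            ring
          rw [hIco]
  have htend : Filter.Tendsto
      (fun k => C * Real.exp (∑ j ∈ range m, g j - ∑ j ∈ range k, g j))
      Filter.atTop (nhds 0) := by
    have h1 : Filter.Tendsto (fun k => ∑ j ∈ range m, g j - ∑ j ∈ range k, g j)
        Filter.atTop Filter.atBot := by
      have h0' := Filter.tendsto_atBot_add_const_left Filter.atTop
        (∑ j ∈ range m, g j) (Filter.tendsto_neg_atTop_atBot.comp hS)
      simpa [sub_eq_add_neg, Function.comp] using h0'
    have h2 := Real.tendsto_exp_atBot.comp h1
    simpa using h2.const_mul C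
  refine squeeze_zero' (Filter.Eventually.of_forall fun k =>
      prod_nonneg fun _ _ => abs_nonneg _)
    ?_ htend
  filter_upwards [Filter.eventually_ge_atTop m] with k hk using hbound k hk

/-- (Müntz–Szász corollary.) Let `μ` be a finite Borel measure on `ℝ` supported in `[0, R]`,
and let `(n_k)` be a strictly increasing sequence of naturals with `n_0 = 0` and
`Σ_{k≥1} 1/n_k = ∞`. If `φ ∈ L¹(μ)` has `∫ x^{n_k} φ(x) dμ(x) = 0` for all `k`, then
`φ = 0` μ-a.e. -/
theorem stmt_13 (μ : Measure ℝ) [IsFiniteMeasure μ]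
    (R : ℝ) (hR : 0 < R) (hsupp : μ (Set.Icc 0 R)ᶜ = 0)
    (n : ℕ → ℕ) (hmono : StrictMono n) (h0 : n 0 = 0)
    (hdiv : ∑' k : ℕ, ((n (k + 1) : ℝ≥0∞))⁻¹ = ⊤)
    (φ : ℝ → ℂ) (hφ : Integrable φ μ)
    (hmom : ∀ k : ℕ, ∫ x, (x ^ n k : ℝ) • φ x ∂μ = 0) :
    φ =ᵐ[μ] 0 := by
  have haein : ∀ᵐ x ∂μ, x ∈ Set.Icc (0 : ℝ) R := by
    rw [MeasureTheory.ae_iff]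
    exact hsupp
  set C : ℝ := ∫ x, ‖φ x‖ ∂μ with hCdef
  have hC0 : 0 ≤ C := integral_nonneg fun x => norm_nonneg _
  -- integrability of all power moments
  have hInt : ∀ p : ℕ, Integrable (fun x => (x ^ p : ℝ) • φ x) μ := by
    intro p
    refine Integrable.mono' (hφ.norm.const_mul ((max 1 R) ^ p)) ?_ ?_
    · exact ((continuous_pow p).aestronglyMeasurable).smul hφ.1
    · filter_upwards [haein] with x hx
      rw [norm_smul, Real.norm_eq_abs, abs_of_nonneg (pow_nonneg hx.1 p)]
      have hxp : x ^ p ≤ (max 1 R) ^ p :=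
        pow_le_pow_left₀ hx.1 (hx.2.trans (le_max_right 1 R)) p
      exact mul_le_mul_of_nonneg_right hxp (norm_nonneg _)
  -- all moments vanish
  have hmomall : ∀ p : ℕ, ∫ x, (x ^ p : ℝ) • φ x ∂μ = 0 := by
    intro p
    by_cases hp : ∃ j, p = n j
    · obtain ⟨j, rfl⟩ := hp
      exact hmom j
    push_neg at hp
    have hp1 : 1 ≤ p := by
      rcases Nat.eq_zero_or_pos p with h | h
      · exact absurd (h.trans h0.symm) (hp 0)
      · exact h
    have hm' : ∀ j, p ≠ n (j + 1) := fun j => hp (j + 1)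
    have key : ∀ k : ℕ, ‖∫ x, (x ^ p : ℝ) • φ x ∂μ‖
        ≤ R ^ p * (∏ j ∈ range k, |1 - (p : ℝ) / (n (j + 1))|) * C := by
      intro k
      obtain ⟨a, ha⟩ := muntz_approx n hmono h0 p hp1 hm' k
      set b : ℕ → ℝ := fun j => R ^ p * a j / R ^ n (j + 1) with hb
      set P : ℝ := ∏ j ∈ range k, |1 - (p : ℝ) / (n (j + 1))| with hP
      have hP0 : 0 ≤ P := prod_nonneg fun _ _ => abs_nonneg _
      have hptw : ∀ x ∈ Set.Icc (0 : ℝ) R,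
          |x ^ p - ∑ j ∈ range k, b j * x ^ n (j + 1)| ≤ R ^ p * P := by
        intro x hx
        have hxR : x / R ∈ Set.Icc (0 : ℝ) 1 :=
          ⟨div_nonneg hx.1 hR.le, (div_le_one hR).2 hx.2⟩
        have h2 := ha (x / R) hxR
        have hrw : x ^ p - ∑ j ∈ range k, b j * x ^ n (j + 1)
            = R ^ p * ((x / R) ^ p - ∑ j ∈ range k, a j * (x / R) ^ n (j + 1)) := by
          rw [mul_sub, Finset.mul_sum]
          congr 1
          · rw [div_pow, mul_div_cancel₀ _ (pow_ne_zero p hR.ne')]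
          · refine sum_congr rfl fun j _ => ?_
            rw [hb, div_pow]
            field_simp
        rw [hrw, abs_mul, abs_of_nonneg (pow_nonneg hR.le p)]
        exact mul_le_mul_of_nonneg_left h2 (pow_nonneg hR.le p)
      have hIj : ∀ j : ℕ, Integrable
          (fun x => b j • ((x ^ n (j + 1) : ℝ) • φ x)) μ := fun j =>
        (hInt (n (j + 1))).smul (b j)
      have hdiffInt : Integrable
          (fun x => ((x ^ p - ∑ j ∈ range k, b j * x ^ n (j + 1)) : ℝ) • φ x) μ := by
        have hrepr : (fun x => ((x ^ p - ∑ j ∈ range k, b j * x ^ n (j + 1)) : ℝ) • φ x)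
            = fun x => (x ^ p : ℝ) • φ x
              - ∑ j ∈ range k, b j • ((x ^ n (j + 1) : ℝ) • φ x) := by
          ext x
          rw [sub_smul, Finset.sum_smul]
          congr 1
          exact sum_congr rfl fun j _ => mul_smul _ _ _
        rw [hrepr]
        exact (hInt p).sub (integrable_finset_sum _ fun j _ => hIj j)
      have heq : ∫ x, (x ^ p : ℝ) • φ x ∂μ
          = ∫ x, ((x ^ p - ∑ j ∈ range k, b j * x ^ n (j + 1)) : ℝ) • φ x ∂μ := by
        have hrepr : ∀ x : ℝ, ((x ^ p - ∑ j ∈ range k, b j * x ^ n (j + 1)) : ℝ) • φ x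
            = (x ^ p : ℝ) • φ x - ∑ j ∈ range k, b j • ((x ^ n (j + 1) : ℝ) • φ x) := by
          intro x
          rw [sub_smul, Finset.sum_smul]
          congr 1
          exact sum_congr rfl fun j _ => mul_smul _ _ _
        rw [show (fun x => ((x ^ p - ∑ j ∈ range k, b j * x ^ n (j + 1)) : ℝ) • φ x)
            = fun x => (x ^ p : ℝ) • φ x
              - ∑ j ∈ range k, b j • ((x ^ n (j + 1) : ℝ) • φ x) from funext hrepr]
        have hIsum : Integrable
            (fun x => ∑ j ∈ range k, b j • ((x ^ n (j + 1) : ℝ) • φ x)) μ :=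
          integrable_finset_sum _ fun j _ => hIj j
        rw [integral_sub (hInt p) hIsum]
        rw [integral_finset_sum _ fun j _ => hIj j]
        have hz : ∀ j ∈ range k, ∫ x, b j • ((x ^ n (j + 1) : ℝ) • φ x) ∂μ = 0 := by
          intro j _
          rw [MeasureTheory.integral_smul, hmom (j + 1), smul_zero]
        rw [sum_congr rfl hz, Finset.sum_const_zero, sub_zero]
      rw [heq]
      calc ‖∫ x, ((x ^ p - ∑ j ∈ range k, b j * x ^ n (j + 1)) : ℝ) • φ x ∂μ‖
          ≤ ∫ x, ‖((x ^ p - ∑ j ∈ range k, b j * x ^ n (j + 1)) : ℝ) • φ x‖ ∂μ :=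
            norm_integral_le_integral_norm _
        _ ≤ ∫ x, (R ^ p * P) * ‖φ x‖ ∂μ := by
            refine integral_mono_ae hdiffInt.norm (hφ.norm.const_mul _) ?_
            filter_upwards [haein] with x hx
            rw [norm_smul, Real.norm_eq_abs]
            exact mul_le_mul_of_nonneg_right (hptw x hx) (norm_nonneg _)
        _ = R ^ p * P * C := by rw [MeasureTheory.integral_const_mul]
    have htend : Filter.Tendsto
        (fun k => R ^ p * (∏ j ∈ range k, |1 - (p : ℝ) / (n (j + 1))|) * C)
        Filter.atTop (nhds 0) := by
      have h1 := (muntz_prod_tendsto_zero n hmono h0 hdiv p hp1).const_mul (R ^ p)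
      have h2 := h1.mul_const C
      simpa using h2
    have hle : ‖∫ x, (x ^ p : ℝ) • φ x ∂μ‖ ≤ 0 :=
      le_of_tendsto_of_tendsto' tendsto_const_nhds htend key
    exact norm_eq_zero.1 (hle.antisymm (norm_nonneg _))
  -- test against smooth compactly supported functions
  have hsmooth : ∀ g : ℝ → ℝ, ContDiff ℝ ((⊤ : ℕ∞) : WithTop ℕ∞) g → HasCompactSupport g →
      ∫ x, g x • φ x ∂μ = 0 := by
    intro g hg hgs
    have hgc : Continuous g := hg.continuous
    obtain ⟨Cg, hCg⟩ := hgc.bounded_above_of_compact_support hgs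
    have hgφ : Integrable (fun x => g x • φ x) μ := by
      refine Integrable.mono' (hφ.norm.const_mul Cg) (hgc.aestronglyMeasurable.smul hφ.1) ?_
      filter_upwards with x
      rw [norm_smul]
      exact mul_le_mul_of_nonneg_right (hCg x) (norm_nonneg _)
    have hbnd : ∀ ε : ℝ, 0 < ε → ‖∫ x, g x • φ x ∂μ‖ ≤ ε * C := by
      intro ε hε
      obtain ⟨q, hq⟩ := exists_polynomial_near_of_continuousOn 0 R g hgc.continuousOn ε hε
      have hqrepr : (fun x : ℝ => (q.eval x : ℝ) • φ x)
          = fun x => ∑ i ∈ range (q.natDegree + 1), q.coeff i • ((x ^ i : ℝ) • φ x) := by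
        ext x
        rw [Polynomial.eval_eq_sum_range, Finset.sum_smul]
        exact sum_congr rfl fun i _ => mul_smul _ _ _
      have hqi : ∀ i : ℕ, Integrable
          (fun x => q.coeff i • ((x ^ i : ℝ) • φ x)) μ := fun i =>
        (hInt i).smul (q.coeff i)
      have hqint : Integrable (fun x : ℝ => (q.eval x : ℝ) • φ x) μ := by
        rw [hqrepr]
        exact integrable_finset_sum _ fun i _ => hqi i
      have hqzero : ∫ x, (q.eval x : ℝ) • φ x ∂μ = 0 := by
        rw [hqrepr, integral_finset_sum _ fun i _ => hqi i]
        refine Finset.sum_eq_zero fun i _ => ?_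
        rw [MeasureTheory.integral_smul, hmomall i, smul_zero]
      have hsplit : ∫ x, g x • φ x ∂μ = ∫ x, ((g x - q.eval x) : ℝ) • φ x ∂μ := by
        have : (fun x => ((g x - q.eval x) : ℝ) • φ x)
            = fun x => g x • φ x - (q.eval x : ℝ) • φ x := by
          ext x; rw [sub_smul]
        rw [this, integral_sub hgφ hqint, hqzero, sub_zero]
      have hdInt : Integrable (fun x => ((g x - q.eval x) : ℝ) • φ x) μ := by
        have h3 : (fun x => ((g x - q.eval x) : ℝ) • φ x)
            = fun x => g x • φ x - (q.eval x : ℝ) • φ x := by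
          ext x; rw [sub_smul]
        rw [h3]
        exact hgφ.sub hqint
      rw [hsplit]
      calc ‖∫ x, ((g x - q.eval x) : ℝ) • φ x ∂μ‖
          ≤ ∫ x, ‖((g x - q.eval x) : ℝ) • φ x‖ ∂μ := norm_integral_le_integral_norm _
        _ ≤ ∫ x, ε * ‖φ x‖ ∂μ := by
            refine integral_mono_ae hdInt.norm (hφ.norm.const_mul ε) ?_
            filter_upwards [haein] with x hx
            rw [norm_smul, Real.norm_eq_abs]
            have h4 : |g x - q.eval x| ≤ ε := by
              rw [abs_sub_comm]
              exact (hq x hx).le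
            exact mul_le_mul_of_nonneg_right h4 (norm_nonneg _)
        _ = ε * C := by rw [MeasureTheory.integral_const_mul]
    have hnorm0 : ‖∫ x, g x • φ x ∂μ‖ ≤ 0 := by
      refine le_of_forall_pos_le_add fun δ hδ => ?_
      rcases eq_or_lt_of_le hC0 with hC | hC
      · have h5 := hbnd 1 one_pos
        rw [← hC, mul_zero] at h5
        linarith
      · have h5 := hbnd (δ / C) (div_pos hδ hC)
        rw [div_mul_cancel₀ _ hC.ne'] at h5
        linarith
    exact norm_eq_zero.1 (hnorm0.antisymm (norm_nonneg _))
  have := ae_eq_zero_of_integral_contDiff_smul_eq_zero hφ.locallyIntegrable hsmooth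
  exact this
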